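/- Let p ∈ [0,1], let (Z_i)_{i∈ℕ} be an i.i.d. sequence of Bernoulli(p) random variables on a probability space Ω, let μ̂_n = (1/n)∑_{i=1}^n Z_i, let d ∈ ℝ with p ≠ d, and let Δ > 0. Define the stopping time J = inf{n ∈ ℕ, n ≥ 1 : |μ̂_n − d| ≥ ε(Δ, n)} (with J = ∞ if no such n exists). Then Pr[J < ∞] = 1. -/

import Mathlib

open MeasureTheory ProbabilityTheory Classical

/-- The adaptive confidence radius
`ε(δ,n) = sqrt(((3/5)·log(log_{11/10}(n) + 1) + (5/9)·log(24/δ))/n)`. -/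
noncomputable def eps (δ : ℝ) (n : ℕ) : ℝ :=
  Real.sqrt (((3 / 5) * Real.log (Real.log n / Real.log (11 / 10) + 1)
      + (5 / 9) * Real.log (24 / δ)) / n)

/-- The empirical mean `μ̂_n = (1/n) ∑_{i=1}^n Z_i`. -/
noncomputable def muhat {Ω : Type*} (Z : ℕ → Ω → ℝ) (n : ℕ) (ω : Ω) : ℝ :=
  (1 / n : ℝ) * ∑ i ∈ Finset.Icc 1 n, Z i ω

/-- The stopping time `J = inf {n ≥ 1 : |μ̂_n − d| ≥ ε(Δ, n)}` of the verification
algorithm for the atomic specification `μ_Z ≥ d` (with `J = ∞` if no such `n` exists). -/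
noncomputable def stopJ {Ω : Type*} (Z : ℕ → Ω → ℝ) (d Δ : ℝ) (ω : Ω) : ℕ∞ :=
  if ∃ n : ℕ, 1 ≤ n ∧ eps Δ n ≤ |muhat Z n ω - d|
  then ((sInf {n : ℕ | 1 ≤ n ∧ eps Δ n ≤ |muhat Z n ω - d|} : ℕ) : ℕ∞)
  else ⊤

open Filter Real

/-- The confidence radius tends to zero. -/
lemma eps_tendsto_zero (Δ : ℝ) : Tendsto (eps Δ) atTop (nhds 0) := by
  set L : ℝ := Real.log (11 / 10) with hL
  have hLpos : 0 < L := Real.log_pos (by norm_num)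
  have hlog : Tendsto (fun n : ℕ => Real.log n / n) atTop (nhds 0) :=
    (Real.isLittleO_log_id_atTop.tendsto_div_nhds_zero).comp
      tendsto_natCast_atTop_atTop
  have h1 : Tendsto (fun n : ℕ => Real.log (Real.log n / L + 1) / n) atTop (nhds 0) := by
    apply squeeze_zero (fun n => ?_) (fun n => ?_)
      (by simpa using hlog.const_mul L⁻¹)
    · apply div_nonneg _ (Nat.cast_nonneg n)
      apply Real.log_nonneg
      have : 0 ≤ Real.log n := Real.log_natCast_nonneg n
      have := div_nonneg this hLpos.le
      linarith
    · have hlogn : 0 ≤ Real.log n := Real.log_natCast_nonneg n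
      have hpos : 0 < Real.log n / L + 1 := by positivity
      have hle : Real.log (Real.log n / L + 1) ≤ Real.log n / L := by
        have := Real.log_le_sub_one_of_pos hpos
        linarith
      calc Real.log (Real.log n / L + 1) / n ≤ (Real.log n / L) / n :=
            div_le_div_of_nonneg_right hle (Nat.cast_nonneg n)
        _ = L⁻¹ * (Real.log n / n) := by ring
  have hf : Tendsto
      (fun n : ℕ => ((3 / 5) * Real.log (Real.log n / L + 1)
        + (5 / 9) * Real.log (24 / Δ)) / n) atTop (nhds 0) := by
    have := (h1.const_mul (3 / 5)).add
      (tendsto_const_div_atTop_nhds_zero_nat ((5 / 9) * Real.log (24 / Δ)))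
    simp only [add_zero, mul_zero] at this
    convert this using 2 with n
    ring
  have hsqrt : Tendsto Real.sqrt (nhds 0) (nhds 0) := by
    simpa using (Real.continuous_sqrt.tendsto 0)
  exact hsqrt.comp hf

/-- Termination of the verification algorithm for the atomic specification `p ≥ d`,
under the well-definedness assumption `p ≠ d`: the stopping time is finite almost
surely. -/
theorem verify_terminates
    {Ω : Type*} [MeasurableSpace Ω] (μ : Measure Ω) [IsProbabilityMeasure μ]
    (p : ℝ) (hp : p ∈ Set.Icc (0 : ℝ) 1)
    (Z : ℕ → Ω → ℝ)
    (hmeas : ∀ i, Measurable (Z i))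
    (hindep : iIndepFun Z μ)
    (hval : ∀ i ω, Z i ω = 0 ∨ Z i ω = 1)
    (hbern : ∀ i, μ {ω | Z i ω = 1} = ENNReal.ofReal p)
    (d : ℝ) (hpd : p ≠ d) (Δ : ℝ) (hΔ : 0 < Δ) :
    μ {ω | stopJ Z d Δ ω ≠ ⊤} = 1 := by
  obtain ⟨hp0, hp1⟩ := hp
  -- each Z i is the indicator of the event {Z i = 1}
  have hind : ∀ i, Z i = Set.indicator {ω | Z i ω = 1} (1 : Ω → ℝ) := by
    intro i
    funext ω
    rcases hval i ω with h | h
    · rw [Set.indicator_of_notMem (by simp [Set.mem_setOf_eq, h]), h]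
    · rw [Set.indicator_of_mem (show ω ∈ {ω | Z i ω = 1} from h), h]
      rfl
  have hsetmeas : ∀ i, MeasurableSet {ω | Z i ω = 1} :=
    fun i => (hmeas i) (measurableSet_singleton 1)
  -- the common distribution
  have hmap : ∀ i, μ.map (Z i)
      = ENNReal.ofReal p • Measure.dirac (1 : ℝ)
        + ENNReal.ofReal (1 - p) • Measure.dirac (0 : ℝ) := by
    intro i
    have hcompl : {ω | Z i ω = 1}ᶜ = {ω | Z i ω = 0} := by
      ext ω
      rcases hval i ω with h | h <;> simp [h]
    have hμ0 : μ {ω | Z i ω = 0} = ENNReal.ofReal (1 - p) := by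
      rw [← hcompl, measure_compl (hsetmeas i) (measure_ne_top μ _), hbern i,
        measure_univ, ENNReal.ofReal_sub _ hp0]
      simp
    ext s hs
    rw [Measure.map_apply (hmeas i) hs]
    have hdecomp : Z i ⁻¹' s
        = (if (1 : ℝ) ∈ s then {ω | Z i ω = 1} else ∅)
          ∪ (if (0 : ℝ) ∈ s then {ω | Z i ω = 0} else ∅) := by
      ext ω
      rcases hval i ω with h | h <;>
        · simp only [Set.mem_preimage, h, Set.mem_union]
          by_cases h1 : (1 : ℝ) ∈ s <;> by_cases h0 : (0 : ℝ) ∈ s <;>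
            simp [h1, h0, h]
    have hdisj : Disjoint
        (if (1 : ℝ) ∈ s then {ω | Z i ω = 1} else ∅)
        (if (0 : ℝ) ∈ s then {ω | Z i ω = 0} else ∅) := by
      by_cases h1 : (1 : ℝ) ∈ s <;> by_cases h0 : (0 : ℝ) ∈ s <;>
        simp [h1, h0, Set.disjoint_left]
      intro ω hω hω'
      rw [hω] at hω'; norm_num at hω'
    have hmeas01 : MeasurableSet (if (0 : ℝ) ∈ s then {ω | Z i ω = 0} else ∅) := by
      by_cases h0 : (0 : ℝ) ∈ s
      · rw [if_pos h0]
        exact (hmeas i) (measurableSet_singleton 0)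
      · simp [h0]
    rw [hdecomp, measure_union hdisj hmeas01]
    simp only [Measure.coe_add, Pi.add_apply, Measure.smul_apply, smul_eq_mul,
      Measure.dirac_apply' _ hs]
    by_cases h1 : (1 : ℝ) ∈ s <;> by_cases h0 : (0 : ℝ) ∈ s <;>
      simp [h1, h0, hbern i, hμ0, Set.indicator_of_mem, Set.indicator_of_notMem]
  -- shifted sequence
  set X : ℕ → Ω → ℝ := fun i => Z (1 + i) with hX
  have hintX : Integrable (X 0) μ := by
    rw [hX]
    simp only
    rw [hind 1]
    exact (integrable_const (1 : ℝ)).indicator (hsetmeas 1)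
  have hpairwise : Pairwise (Function.onFun (IndepFun · · μ) X) := by
    intro i j hij
    exact hindep.indepFun (by omega : 1 + i ≠ 1 + j)
  have hident : ∀ i, IdentDistrib (X i) (X 0) μ μ := by
    intro i
    exact ⟨(hmeas _).aemeasurable, (hmeas _).aemeasurable, by rw [hmap, hmap]⟩
  have hmean : μ[X 0] = p := by
    rw [hX]
    simp only
    rw [hind 1, integral_indicator_one (hsetmeas 1), measureReal_def, hbern 1,
      ENNReal.toReal_ofReal hp0]
  have hslln := strong_law_ae_real X hintX hpairwise hident
  rw [hmean] at hslln
  -- the a.e. set where the algorithm terminates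
  have hae : ∀ᵐ ω ∂μ, stopJ Z d Δ ω ≠ ⊤ := by
    filter_upwards [hslln] with ω hω
    have hsum : ∀ n : ℕ, (∑ i ∈ Finset.range n, X i ω) = ∑ i ∈ Finset.Icc 1 n, Z i ω := by
      intro n
      rw [← Finset.Ico_add_one_right_eq_Icc, Finset.sum_Ico_eq_sum_range]
      simp [hX]
    have hmu : Tendsto (fun n => muhat Z n ω) atTop (nhds p) := by
      have : (fun n : ℕ => (∑ i ∈ Finset.range n, X i ω) / n)
          = fun n => muhat Z n ω := by
        funext n
        rw [hsum n, muhat]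
        ring
      rwa [this] at hω
    have habs : Tendsto (fun n => |muhat Z n ω - d|) atTop (nhds |p - d|) :=
      ((hmu.sub tendsto_const_nhds).abs)
    set c : ℝ := |p - d| / 2 with hc
    have hcpos : 0 < c := by
      have : p - d ≠ 0 := sub_ne_zero.mpr hpd
      have := abs_pos.mpr this
      positivity
    have h2 : ∀ᶠ n in atTop, c < |muhat Z n ω - d| :=
      habs.eventually_const_lt (by rw [hc]; linarith [abs_pos.mpr (sub_ne_zero.mpr hpd)])
    have h3 : ∀ᶠ n in atTop, eps Δ n < c :=
      (eps_tendsto_zero Δ).eventually_lt_const hcpos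
    have h4 : ∀ᶠ n in atTop, 1 ≤ n := eventually_ge_atTop 1
    obtain ⟨n, ⟨hn2a, hn2b⟩, hn4⟩ := ((h2.and h3).and h4).exists
    have hex : ∃ m : ℕ, 1 ≤ m ∧ eps Δ m ≤ |muhat Z m ω - d| :=
      ⟨n, hn4, le_of_lt (lt_trans hn2b hn2a)⟩
    rw [stopJ, if_pos hex]
    exact WithTop.coe_ne_top
  -- convert a.e. to measure one
  have h0 : μ {ω | stopJ Z d Δ ω ≠ ⊤}ᶜ = 0 := by
    have h := ae_iff.mp hae
    simpa [Set.compl_setOf] using h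
  have h1 := measure_union_le (μ := μ) {ω | stopJ Z d Δ ω ≠ ⊤} {ω | stopJ Z d Δ ω ≠ ⊤}ᶜ
  rw [Set.union_compl_self, measure_univ, h0, add_zero] at h1
  exact le_antisymm prob_le_one h1
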